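/- Let K be a compact metric space, let ν be a Borel probability measure on K with full support, let B : K → ℝ be continuous with a unique global minimizer u* ∈ K, and let h : K → ℝ be continuous. Then lim_{ε → 0⁺} (∫_K h(u) exp(−B(u)/ε) dν(u)) / (∫_K exp(−B(u)/ε) dν(u)) = h(u*); that is, the Gibbs measures with energy B and temperature ε concentrate at the unique minimizer of B as ε → 0. -/

import Mathlib

open MeasureTheory Filter

lemma cont_integrable_aux {K : Type*} [MetricSpace K] [CompactSpace K]
    [MeasurableSpace K] [BorelSpace K] (ν : Measure K) [IsFiniteMeasure ν]
    {f : K → ℝ} (hf : Continuous f) : Integrable f ν :=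
  hf.integrable_of_hasCompactSupport
    (IsCompact.of_isClosed_subset isCompact_univ (isClosed_tsupport f) (Set.subset_univ _))

/-- Gibbs measures with continuous energy `B` on a compact metric space,
with respect to a fully supported probability measure `ν`, concentrate at the unique
global minimizer `u*` of `B` as the temperature `ε → 0⁺`: for every continuous `h`,
`(∫ h e^{-B/ε} dν) / (∫ e^{-B/ε} dν) → h(u*)`. -/
theorem stmt8 {K : Type*} [MetricSpace K] [CompactSpace K]
    [MeasurableSpace K] [BorelSpace K]
    (ν : Measure K) [IsProbabilityMeasure ν]
    (hfull : ∀ U : Set K, IsOpen U → U.Nonempty → 0 < ν U)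
    (B : K → ℝ) (hB : Continuous B)
    (us : K) (hmin : ∀ u, B us ≤ B u) (huniq : ∀ u, B u ≤ B us → u = us)
    (h : K → ℝ) (hh : Continuous h) :
    Filter.Tendsto
      (fun ε : ℝ =>
        (∫ u, h u * Real.exp (-B u / ε) ∂ν) / ∫ u, Real.exp (-B u / ε) ∂ν)
      (nhdsWithin 0 (Set.Ioi 0)) (nhds (h us)) := by
  rw [Metric.tendsto_nhds]
  intro δ hδ
  -- bound on h
  obtain ⟨C, hC⟩ := isCompact_univ.exists_bound_of_continuousOn hh.continuousOn
  have hC0 : 0 ≤ C := le_trans (norm_nonneg _) (hC us trivial)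
  -- neighborhood where h is close to h us
  have hcont : ∀ᶠ u in nhds us, |h u - h us| < δ/4 := by
    have := (hh.tendsto us)
    rw [Metric.tendsto_nhds] at this
    filter_upwards [this (δ/4) (by linarith)] with u hu
    simpa [Real.dist_eq] using hu
  obtain ⟨U, hUsub, hUopen, hUmem⟩ := eventually_nhds_iff.mp hcont
  -- gap m
  obtain ⟨m, hm0, hmB⟩ : ∃ m > 0, ∀ u, u ∉ U → B us + m ≤ B u := by
    by_cases hne : Uᶜ.Nonempty
    · have hUc : IsCompact Uᶜ := (hUopen.isClosed_compl).isCompact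
      obtain ⟨u0, hu0U, hu0⟩ := hUc.exists_isMinOn hne hB.continuousOn
      have hgt : B us < B u0 := by
        rcases lt_or_ge (B us) (B u0) with H | H
        · exact H
        · exact absurd (huniq u0 H ▸ hu0U) (fun h' => h' hUmem)
      refine ⟨B u0 - B us, by linarith, fun u hu => ?_⟩
      have := hu0 hu
      simp only [Set.mem_setOf_eq] at this
      linarith
    · exact ⟨1, one_pos, fun u hu => absurd (Set.not_nonempty_iff_eq_empty.mp hne ▸ hu : u ∈ (∅ : Set K)) (Set.notMem_empty u)⟩
  -- the set V where B is close to the min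
  set V : Set K := {u | B u < B us + m/2} with hV
  have hVopen : IsOpen V := isOpen_lt hB continuous_const
  have hVmem : us ∈ V := by simp [hV]; linarith
  have hνV : 0 < (ν V).toReal :=
    ENNReal.toReal_pos (hfull V hVopen ⟨us, hVmem⟩).ne' (measure_ne_top ν V)
  -- eventual smallness of the exponential factor
  have hexp : Tendsto (fun ε : ℝ => Real.exp (-(m/2)/ε)) (nhdsWithin 0 (Set.Ioi 0)) (nhds 0) := by
    have h2 : Tendsto (fun x : ℝ => (-(m/2)) * x) atTop atBot :=
      (tendsto_const_mul_atBot_of_neg (by linarith)).mpr tendsto_id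
    have h1 := h2.comp (tendsto_inv_nhdsGT_zero (𝕜 := ℝ))
    have h3 : Tendsto (fun ε : ℝ => (-(m/2))/ε) (nhdsWithin 0 (Set.Ioi 0)) atBot := by
      have heq : (fun ε : ℝ => (-(m/2))/ε) = (fun x : ℝ => (-(m/2)) * x) ∘ (fun ε : ℝ => ε⁻¹) := by
        funext ε; simp only [Function.comp_apply, div_eq_mul_inv]
      rw [heq]; exact h1
    exact Real.tendsto_exp_atBot.comp h3
  have hev : ∀ᶠ ε in nhdsWithin (0:ℝ) (Set.Ioi 0),
      (2*C) / (ν V).toReal * Real.exp (-(m/2)/ε) < δ/2 := by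
    have := (hexp.const_mul ((2*C) / (ν V).toReal))
    rw [mul_zero] at this
    exact this.eventually_lt_const (by linarith)
  filter_upwards [hev, self_mem_nhdsWithin] with ε hsmall (hε : 0 < ε)
  -- now the main estimate for fixed ε > 0
  set f : K → ℝ := fun u => Real.exp (-B u / ε) with hf
  have hfc : Continuous f := Real.continuous_exp.comp ((hB.neg).div_const ε)
  have hfpos : ∀ u, 0 < f u := fun u => Real.exp_pos _
  have hfint : Integrable f ν := cont_integrable_aux ν hfc
  have hhfint : Integrable (fun u => h u * f u) ν := cont_integrable_aux ν (hh.mul hfc)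
  set Z : ℝ := ∫ u, f u ∂ν with hZ
  -- lower bound on Z
  have hZlb : (ν V).toReal * Real.exp (-(B us + m/2)/ε) ≤ Z := by
    have h1 : ∫ u in V, Real.exp (-(B us + m/2)/ε) ∂ν ≤ ∫ u in V, f u ∂ν := by
      apply setIntegral_mono_on (integrableOn_const (measure_ne_top ν V))
        (hfint.integrableOn) (hVopen.measurableSet)
      intro u hu
      apply Real.exp_le_exp.mpr
      rw [div_le_div_iff_of_pos_right hε]  -- may need different name
      have : B u < B us + m/2 := hu
      linarith
    have h2 : ∫ u in V, f u ∂ν ≤ Z := setIntegral_le_integral hfint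
      (Filter.Eventually.of_forall (fun u => (hfpos u).le))
    calc (ν V).toReal * Real.exp (-(B us + m/2)/ε)
        = ∫ u in V, Real.exp (-(B us + m/2)/ε) ∂ν := by rw [setIntegral_const, smul_eq_mul, measureReal_def]
      _ ≤ Z := le_trans h1 h2
  have hZpos : 0 < Z :=
    lt_of_lt_of_le (mul_pos hνV (Real.exp_pos _)) hZlb
  -- numerator estimate
  have hnum : |(∫ u, h u * f u ∂ν) - h us * Z| ≤ δ/4 * Z + 2*C * Real.exp (-(B us + m)/ε) := by
    have heq : (∫ u, h u * f u ∂ν) - h us * Z = ∫ u, (h u - h us) * f u ∂ν := by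
      rw [hZ, ← integral_const_mul, ← integral_sub hhfint (hfint.const_mul _)]
      congr 1; ext u; ring
    rw [heq]
    have hint2 : Integrable (fun u => (h u - h us) * f u) ν :=
      cont_integrable_aux ν (((hh.sub continuous_const).mul hfc))
    have habs : |∫ u, (h u - h us) * f u ∂ν| ≤ ∫ u, |h u - h us| * f u ∂ν := by
      rw [← Real.norm_eq_abs]
      refine le_trans (norm_integral_le_integral_norm _) ?_
      apply le_of_eq
      congr 1; ext u; rw [Real.norm_eq_abs, abs_mul, abs_of_pos (hfpos u)]
    refine le_trans habs ?_
    have hintabs : Integrable (fun u => |h u - h us| * f u) ν :=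
      cont_integrable_aux ν (((hh.sub continuous_const).abs).mul hfc)
    rw [← integral_add_compl hUopen.measurableSet hintabs]
    have hUpart : ∫ u in U, |h u - h us| * f u ∂ν ≤ δ/4 * Z := by
      have : ∫ u in U, |h u - h us| * f u ∂ν ≤ ∫ u in U, δ/4 * f u ∂ν := by
        apply setIntegral_mono_on hintabs.integrableOn ((hfint.const_mul _).integrableOn)
          hUopen.measurableSet
        intro u hu
        exact mul_le_mul_of_nonneg_right (hUsub u hu).le (hfpos u).le
      refine le_trans this ?_
      rw [integral_const_mul]
      apply mul_le_mul_of_nonneg_left _ (by linarith)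
      exact setIntegral_le_integral hfint (Filter.Eventually.of_forall (fun u => (hfpos u).le))
    have hUcpart : ∫ u in Uᶜ, |h u - h us| * f u ∂ν ≤ 2*C * Real.exp (-(B us + m)/ε) := by
      have hb : ∀ u ∈ Uᶜ, |h u - h us| * f u ≤ 2*C * Real.exp (-(B us + m)/ε) := by
        intro u hu
        have h1 : |h u - h us| ≤ 2*C := by
          have := hC u trivial
          have := hC us trivial
          rw [Real.norm_eq_abs] at *
          calc |h u - h us| ≤ |h u| + |h us| := abs_sub _ _
            _ ≤ 2*C := by linarith
        have h2 : f u ≤ Real.exp (-(B us + m)/ε) := by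
          apply Real.exp_le_exp.mpr
          rw [div_le_div_iff_of_pos_right hε]
          have := hmB u hu
          linarith
        calc |h u - h us| * f u ≤ 2*C * f u :=
              mul_le_mul_of_nonneg_right h1 (hfpos u).le
          _ ≤ 2*C * Real.exp (-(B us + m)/ε) :=
              mul_le_mul_of_nonneg_left h2 (by linarith)
      calc ∫ u in Uᶜ, |h u - h us| * f u ∂ν
          ≤ ∫ _ in Uᶜ, 2*C * Real.exp (-(B us + m)/ε) ∂ν :=
            setIntegral_mono_on hintabs.integrableOn
              (integrableOn_const (measure_ne_top ν Uᶜ))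
              hUopen.isClosed_compl.measurableSet hb
        _ = (ν Uᶜ).toReal * (2*C * Real.exp (-(B us + m)/ε)) := by
            rw [setIntegral_const, smul_eq_mul, measureReal_def]
        _ ≤ 1 * (2*C * Real.exp (-(B us + m)/ε)) := by
            apply mul_le_mul_of_nonneg_right _ (by positivity)
            exact ENNReal.toReal_le_of_le_ofReal one_pos.le (by simpa using prob_le_one)
        _ = 2*C * Real.exp (-(B us + m)/ε) := one_mul _
    linarith
  -- conclude
  have key : dist ((∫ u, h u * f u ∂ν) / Z) (h us) ≤ δ/4 + 2*C / (ν V).toReal * Real.exp (-(m/2)/ε) := by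
    rw [Real.dist_eq]
    have : (∫ u, h u * f u ∂ν) / Z - h us = ((∫ u, h u * f u ∂ν) - h us * Z) / Z := by
      field_simp
    rw [this, abs_div, abs_of_pos hZpos, div_le_iff₀ hZpos]
    have hratio : 2*C * Real.exp (-(B us + m)/ε)
        ≤ (2*C / (ν V).toReal * Real.exp (-(m/2)/ε)) * Z := by
      have hexps : Real.exp (-(m/2)/ε) * Real.exp (-(B us + m/2)/ε) = Real.exp (-(B us + m)/ε) := by
        rw [← Real.exp_add]
        congr 1
        field_simp
        ring
      have : (2*C / (ν V).toReal * Real.exp (-(m/2)/ε)) * ((ν V).toReal * Real.exp (-(B us + m/2)/ε))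
          = 2*C * Real.exp (-(B us + m)/ε) := by
        rw [← hexps]
        field_simp
      calc 2*C * Real.exp (-(B us + m)/ε)
          = (2*C / (ν V).toReal * Real.exp (-(m/2)/ε)) * ((ν V).toReal * Real.exp (-(B us + m/2)/ε)) := this.symm
        _ ≤ (2*C / (ν V).toReal * Real.exp (-(m/2)/ε)) * Z := by
            apply mul_le_mul_of_nonneg_left hZlb (by positivity)
    calc |(∫ u, h u * f u ∂ν) - h us * Z| ≤ δ/4 * Z + 2*C * Real.exp (-(B us + m)/ε) := hnum
      _ ≤ δ/4 * Z + (2*C / (ν V).toReal * Real.exp (-(m/2)/ε)) * Z := by linarith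
      _ = (δ/4 + 2*C / (ν V).toReal * Real.exp (-(m/2)/ε)) * Z := by ring
  calc dist ((∫ u, h u * f u ∂ν) / Z) (h us)
      ≤ δ/4 + 2*C / (ν V).toReal * Real.exp (-(m/2)/ε) := key
    _ < δ/4 + δ/2 := by linarith
    _ < δ := by linarith
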